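/- Let Φ be irreducible with base Δ and let δ ≠ δ' be simple roots. If τ ∈ W satisfies (τω̌_δ, ω_{δ'}) < (ω̌_δ, ω_{δ'}), then ω̌_δ − τω̌_δ ≥ Σ_{ε ∈ [δ,δ']} ε̌, where [δ,δ'] is the set of simple roots on the path from δ to δ' in the Dynkin diagram and ≥ denotes the dominance order on the coroot lattice (difference is a nonnegative integer combination of simple coroots). -/

import Mathlib

open scoped RealInnerProductSpace Classical
open Finset

/-- A crystallographic reduced root system in a real inner product space. -/
structure IsRootSystem {E : Type*} [NormedAddCommGroup E] [InnerProductSpace ℝ E]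
    (Φ : Set E) : Prop where
  finite : Φ.Finite
  nonempty : Φ.Nonempty
  zero_not_mem : (0 : E) ∉ Φ
  span_eq_top : Submodule.span ℝ Φ = ⊤
  reflection_mem : ∀ α ∈ Φ, ∀ β ∈ Φ, β - (2 * ⟪α, β⟫ / ⟪α, α⟫) • α ∈ Φ
  crystallographic : ∀ α ∈ Φ, ∀ β ∈ Φ, ∃ n : ℤ, 2 * ⟪α, β⟫ / ⟪α, α⟫ = (n : ℝ)
  reduced : ∀ α ∈ Φ, ∀ t : ℝ, t • α ∈ Φ → t = 1 ∨ t = -1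

variable {E : Type*} [NormedAddCommGroup E] [InnerProductSpace ℝ E] [FiniteDimensional ℝ E]

/-- The orthogonal reflection in the hyperplane orthogonal to `α`. -/
noncomputable def sref (α : E) : E ≃ₗᵢ[ℝ] E := Submodule.reflection (ℝ ∙ α)ᗮ

/-- The group generated by the reflections `s_α`, `α ∈ B`. -/
noncomputable def reflSubgroup (B : Set E) : Subgroup (E ≃ₗᵢ[ℝ] E) :=
  Subgroup.closure {w | ∃ α ∈ B, w = sref α}

/-- The Weyl group of `Φ`. -/
noncomputable def WeylGroup (Φ : Set E) : Subgroup (E ≃ₗᵢ[ℝ] E) := reflSubgroup Φ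

/-- Connectivity of a set of nodes, two nodes being adjacent when they are not
orthogonal (this is the Dynkin-diagram adjacency for simple roots). -/
def IsConnectedSet (S : Set E) : Prop :=
  ∀ x ∈ S, ∀ y ∈ S, Relation.ReflTransGen (fun a b => a ∈ S ∧ b ∈ S ∧ ⟪a, b⟫ ≠ 0) x y

/-- The connected component of `x` in `S` for the non-orthogonality adjacency. -/
def component (S : Set E) (x : E) : Set E :=
  {y ∈ S | Relation.ReflTransGen (fun a b => a ∈ S ∧ b ∈ S ∧ ⟪a, b⟫ ≠ 0) x y}

/-- The coroot `ε̌ = 2ε/(ε,ε)` of `ε`. -/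
noncomputable def coroot (ε : E) : E := (2 / ⟪ε, ε⟫) • ε

/-! ### Auxiliary development -/

set_option linter.unusedSectionVars false
set_option linter.unusedVariables false
set_option maxHeartbeats 1000000

lemma sref_apply (α x : E) : sref α x = x - (2 * ⟪α, x⟫ / ⟪α, α⟫) • α := by
  rw [sref, Submodule.reflection_orthogonal_apply, Submodule.reflection_singleton_apply,
    real_inner_self_eq_norm_sq α]
  simp only [RCLike.ofReal_real_eq_id, id_eq]
  match_scalars <;> ring

lemma sref_apply' (α x : E) : sref α x = x - ⟪α, x⟫ • coroot α := by
  rw [sref_apply, coroot, smul_smul]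
  ring_nf

lemma sref_self (α : E) (hα : α ≠ 0) : sref α α = -α := by
  rw [sref_apply]
  have h : ⟪α, α⟫ ≠ 0 := inner_self_ne_zero.2 hα
  rw [mul_div_assoc, div_self h]
  module

lemma sref_mul_self (α : E) : sref α * sref α = 1 := Submodule.reflection_mul_reflection _

lemma sref_inv (α : E) : (sref α)⁻¹ = sref α := Submodule.reflection_inv

lemma sref_map (f : E ≃ₗᵢ[ℝ] E) (α x : E) : sref (f α) (f x) = f (sref α x) := by
  rw [sref_apply, sref_apply, f.inner_map_map, f.inner_map_map, map_sub, map_smul]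

lemma lie_mul_apply (f g : E ≃ₗᵢ[ℝ] E) (x : E) : (f * g) x = f (g x) := rfl

lemma inv_apply_apply (f : E ≃ₗᵢ[ℝ] E) (x : E) : f⁻¹ (f x) = x := f.symm_apply_apply x

lemma apply_inv_apply (f : E ≃ₗᵢ[ℝ] E) (x : E) : f (f⁻¹ x) = x := f.apply_symm_apply x

lemma sref_conj (f : E ≃ₗᵢ[ℝ] E) (α : E) : sref (f α) = f * sref α * f⁻¹ := by
  ext x
  rw [lie_mul_apply, lie_mul_apply]
  conv_lhs => rw [show x = f (f⁻¹ x) from (apply_inv_apply f x).symm]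
  rw [sref_map]

lemma sref_neg (α : E) : sref (-α) = sref α := by
  ext x
  rw [sref_apply, sref_apply, inner_neg_left, inner_neg_neg, smul_neg, mul_neg, neg_div, neg_smul,
    neg_neg]

/-- Bundled data for the development. -/
structure RS (E : Type*) [NormedAddCommGroup E] [InnerProductSpace ℝ E]
    [FiniteDimensional ℝ E] where
  Φ : Finset E
  Δ : Finset E
  hΦ : IsRootSystem (↑Φ : Set E)
  hΔΦ : (↑Δ : Set E) ⊆ (↑Φ : Set E)
  hbase : ∀ β ∈ Φ, β ∈ AddSubmonoid.closure (↑Δ : Set E) ∨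
      -β ∈ AddSubmonoid.closure (↑Δ : Set E)
  cw : E → E
  hcw : ∀ α ∈ Δ, ∀ β ∈ Δ, ⟪cw α, β⟫ = if α = β then 1 else 0

namespace RS

variable (D : RS E)

/-- positive roots -/
def Pos (β : E) : Prop := β ∈ D.Φ ∧ β ∈ AddSubmonoid.closure (↑D.Δ : Set E)

lemma root_ne_zero {β : E} (hβ : β ∈ D.Φ) : β ≠ 0 := by
  rintro rfl; exact D.hΦ.zero_not_mem hβ

lemma simple_mem_phi {ε : E} (hε : ε ∈ D.Δ) : ε ∈ D.Φ := D.hΔΦ hε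

lemma sref_mem_phi {α β : E} (hα : α ∈ D.Φ) (hβ : β ∈ D.Φ) : sref α β ∈ D.Φ := by
  rw [sref_apply]
  exact_mod_cast D.hΦ.reflection_mem α hα β hβ

/-- coefficients of an element of the positive cone are nonnegative integers -/
lemma coeff_nat {x : E} (hx : x ∈ AddSubmonoid.closure (↑D.Δ : Set E)) {γ : E} (hγ : γ ∈ D.Δ) :
    ∃ n : ℕ, ⟪D.cw γ, x⟫ = n := by
  induction hx using AddSubmonoid.closure_induction with
  | mem y hy =>
    rw [D.hcw γ hγ y hy]
    split_ifs
    · exact ⟨1, by norm_num⟩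
    · exact ⟨0, by norm_num⟩
  | zero => exact ⟨0, by simp⟩
  | add y z _ _ hy hz =>
    obtain ⟨m, hm⟩ := hy
    obtain ⟨n, hn⟩ := hz
    exact ⟨m + n, by rw [inner_add_right, hm, hn]; push_cast; ring⟩

lemma coeff_nonneg {x : E} (hx : x ∈ AddSubmonoid.closure (↑D.Δ : Set E)) {γ : E}
    (hγ : γ ∈ D.Δ) : 0 ≤ ⟪D.cw γ, x⟫ := by
  obtain ⟨n, hn⟩ := D.coeff_nat hx hγ
  rw [hn]; positivity

/-- representation of an element of the positive cone -/
lemma repr {x : E} (hx : x ∈ AddSubmonoid.closure (↑D.Δ : Set E)) :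
    x = ∑ γ ∈ D.Δ, ⟪D.cw γ, x⟫ • γ := by
  induction hx using AddSubmonoid.closure_induction with
  | mem y hy =>
    have hyΔ : y ∈ D.Δ := hy
    rw [Finset.sum_congr rfl (fun γ hγ => by rw [D.hcw γ hγ y hyΔ, ite_smul, one_smul,
      zero_smul])]
    rw [Finset.sum_ite_eq' D.Δ y (fun γ => γ), if_pos hyΔ]
  | zero => simp
  | add y z hy' hz' hy hz =>
    conv_lhs => rw [hy, hz]
    rw [← Finset.sum_add_distrib]
    exact Finset.sum_congr rfl fun γ hγ => by rw [inner_add_right, add_smul]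

lemma pos_or_neg {β : E} (hβ : β ∈ D.Φ) : D.Pos β ∨ D.Pos (-β) := by
  rcases D.hbase β hβ with h | h
  · exact Or.inl ⟨hβ, h⟩
  · refine Or.inr ⟨?_, h⟩
    have := D.hΦ.reflection_mem β hβ β hβ
    have h2 : β - (2 * ⟪β, β⟫ / ⟪β, β⟫) • β = -β := by
      rw [mul_div_assoc, div_self (inner_self_ne_zero.2 (D.root_ne_zero hβ))]
      module
    rw [h2] at this
    exact_mod_cast this

lemma not_pos_neg {β : E} (h : D.Pos β) : ¬ D.Pos (-β) := by
  rintro ⟨hmem, hneg⟩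
  have h0 : ∀ γ ∈ D.Δ, ⟪D.cw γ, β⟫ = 0 := by
    intro γ hγ
    have h1 := D.coeff_nonneg h.2 hγ
    have h2 := D.coeff_nonneg hneg hγ
    rw [inner_neg_right] at h2
    linarith
  have : β = 0 := by
    rw [D.repr h.2, Finset.sum_congr rfl fun γ hγ => by rw [h0 γ hγ]]
    simp
  exact D.root_ne_zero h.1 this

lemma pos_simple {ε : E} (hε : ε ∈ D.Δ) : D.Pos ε :=
  ⟨D.simple_mem_phi hε, AddSubmonoid.subset_closure hε⟩

lemma not_pos_neg_simple {ε : E} (hε : ε ∈ D.Δ) : ¬ D.Pos (-ε) :=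
  D.not_pos_neg (D.pos_simple hε)

/-- K1 : a simple reflection permutes the positive roots other than `ε`. -/
lemma sref_pos {ε β : E} (hε : ε ∈ D.Δ) (hβ : D.Pos β) (hne : β ≠ ε) : D.Pos (sref ε β) := by
  have hβ' : sref ε β ∈ D.Φ := D.sref_mem_phi (D.simple_mem_phi hε) hβ.1
  rcases D.pos_or_neg hβ' with h | h
  · exact h
  · exfalso
    have hcoeff : ∀ γ ∈ D.Δ, γ ≠ ε → ⟪D.cw γ, β⟫ = 0 := by
      intro γ hγ hγε
      have h1 : ⟪D.cw γ, sref ε β⟫ = ⟪D.cw γ, β⟫ := by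
        rw [sref_apply, inner_sub_right, inner_smul_right, D.hcw γ hγ ε hε, if_neg hγε]
        ring
      have h2 := D.coeff_nonneg h.2 hγ
      rw [inner_neg_right, h1] at h2
      have h3 := D.coeff_nonneg hβ.2 hγ
      linarith
    have hrepr : β = ⟪D.cw ε, β⟫ • ε := by
      conv_lhs => rw [D.repr hβ.2]
      rw [Finset.sum_eq_single ε]
      · intro γ hγ hγε
        rw [hcoeff γ hγ hγε, zero_smul]
      · intro h; exact absurd hε h
    have := D.hΦ.reduced ε (D.simple_mem_phi hε) ⟪D.cw ε, β⟫ (by rw [← hrepr]; exact_mod_cast hβ.1)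
    rcases this with h1 | h1
    · rw [h1, one_smul] at hrepr; exact hne hrepr
    · have := D.coeff_nonneg hβ.2 hε
      rw [h1] at this; linarith

end RS

namespace RS
variable {E : Type*} [NormedAddCommGroup E] [InnerProductSpace ℝ E] [FiniteDimensional ℝ E]
variable (D : RS E)

omit [FiniteDimensional ℝ E] in
lemma refl_le {B B' : Set E} (h : B ⊆ B') : reflSubgroup B ≤ reflSubgroup B' :=
  Subgroup.closure_mono (by rintro w ⟨α, hα, rfl⟩; exact ⟨α, h hα, rfl⟩)

/-- elements of the Weyl group permute the roots -/
lemma weyl_maps_phi {w : E ≃ₗᵢ[ℝ] E} (hw : w ∈ reflSubgroup (↑D.Φ : Set E)) :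
    ∀ β ∈ D.Φ, w β ∈ D.Φ := by
  have key : ∀ w ∈ reflSubgroup (↑D.Φ : Set E),
      (∀ β ∈ D.Φ, w β ∈ D.Φ) ∧ (∀ β ∈ D.Φ, w⁻¹ β ∈ D.Φ) := by
    intro w hw
    induction hw using Subgroup.closure_induction with
    | mem y hy =>
      obtain ⟨α, hα, rfl⟩ := hy
      have hs : ∀ β ∈ D.Φ, sref α β ∈ D.Φ := fun β hβ => D.sref_mem_phi hα hβ
      exact ⟨hs, by rw [sref_inv]; exact hs⟩
    | one => simp
    | mul y z _ _ hy hz =>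
      refine ⟨fun β hβ => ?_, fun β hβ => ?_⟩
      · rw [lie_mul_apply]; exact hy.1 _ (hz.1 β hβ)
      · rw [mul_inv_rev, lie_mul_apply]; exact hz.2 _ (hy.2 β hβ)
    | inv y _ hy => exact ⟨by simpa using hy.2, by simpa using hy.1⟩
  exact (key w hw).1

lemma simple_weyl_maps_phi {w : E ≃ₗᵢ[ℝ] E} (hw : w ∈ reflSubgroup (↑D.Δ : Set E)) :
    ∀ β ∈ D.Φ, w β ∈ D.Φ := D.weyl_maps_phi (refl_le D.hΔΦ hw)

/-- every element of the subgroup generated by simple reflections is a product of a list -/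
lemma exists_word {w : E ≃ₗᵢ[ℝ] E} (hw : w ∈ reflSubgroup (↑D.Δ : Set E)) :
    ∃ l : List E, (∀ ε ∈ l, ε ∈ D.Δ) ∧ w = (l.map sref).prod := by
  induction hw using Subgroup.closure_induction with
  | mem y hy =>
    obtain ⟨α, hα, rfl⟩ := hy
    exact ⟨[α], by simpa using hα, by simp⟩
  | one => exact ⟨[], by simp, by simp⟩
  | mul y z _ _ hy hz =>
    obtain ⟨l₁, h₁, rfl⟩ := hy
    obtain ⟨l₂, h₂, rfl⟩ := hz
    refine ⟨l₁ ++ l₂, ?_, by rw [List.map_append, List.prod_append]⟩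
    intro x hx
    rcases List.mem_append.1 hx with h | h
    · exact h₁ x h
    · exact h₂ x h
  | inv y _ hy =>
    obtain ⟨l, hl, rfl⟩ := hy
    refine ⟨l.reverse, fun x hx => hl x (List.mem_reverse.1 hx), ?_⟩
    rw [List.prod_inv_reverse]
    simp only [← List.map_reverse, List.map_map, Function.comp_def, sref_inv]

end RS

namespace RS
variable {E : Type*} [NormedAddCommGroup E] [InnerProductSpace ℝ E] [FiniteDimensional ℝ E]
variable (D : RS E)

lemma prod_append_apply (l₁ l₂ : List E) (x : E) :
    (((l₁ ++ l₂).map sref).prod) x = ((l₁.map sref).prod) (((l₂.map sref).prod) x) := by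
  rw [List.map_append, List.prod_append, lie_mul_apply]

/-- D1 : if a word sends the positive root `β` to a non-positive vector, then at some
point along the word the running vector is exactly the next reflecting simple root. -/
lemma first_neg : ∀ (l : List E), (∀ ε ∈ l, ε ∈ D.Δ) → ∀ {β : E}, D.Pos β →
    ¬ D.Pos (((l.map sref).prod) β) →
    ∃ l₁ ε l₂, l = l₁ ++ ε :: l₂ ∧ ε ∈ D.Δ ∧ ((l₂.map sref).prod) β = ε := by
  intro l
  induction l using List.reverseRecOn with
  | nil => intro _ β hβ hneg; exact absurd hβ (by simpa using hneg)
  | append_singleton l' ε' ih =>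
    intro hΔ β hβ hneg
    have hε' : ε' ∈ D.Δ := hΔ ε' (by simp)
    by_cases hβε : β = ε'
    · exact ⟨l', ε', [], by simp, hε', by simpa using hβε⟩
    · have hpos : D.Pos (sref ε' β) := D.sref_pos hε' hβ hβε
      have hneg' : ¬ D.Pos (((l'.map sref).prod) (sref ε' β)) := by
        rw [prod_append_apply] at hneg
        simpa using hneg
      obtain ⟨l₁, ε, l₂, hsplit, hεΔ, hprod⟩ :=
        ih (fun x hx => hΔ x (by simp [hx])) hpos hneg'
      refine ⟨l₁, ε, l₂ ++ [ε'], by simp [hsplit], hεΔ, ?_⟩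
      rw [prod_append_apply]
      simpa using hprod

/-- deletion: a word that maps all positive roots to positive roots is the identity -/
lemma word_one : ∀ n : ℕ, ∀ l : List E, l.length ≤ n → (∀ ε ∈ l, ε ∈ D.Δ) →
    (∀ β, D.Pos β → D.Pos (((l.map sref).prod) β)) → (l.map sref).prod = 1 := by
  intro n
  induction n with
  | zero =>
    intro l hl _ _
    rw [Nat.le_zero, List.length_eq_zero_iff] at hl
    simp [hl]
  | succ n ih =>
    intro l hlen hΔ hpos
    induction l using List.reverseRecOn with
    | nil => simp
    | append_singleton l' εk ih2 =>
      clear ih2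
      have hεk : εk ∈ D.Δ := hΔ εk (by simp)
      have hεk0 : εk ≠ 0 := D.root_ne_zero (D.simple_mem_phi hεk)
      have h1 : ((((l' ++ [εk]).map sref).prod)) εk = -(((l'.map sref).prod) εk) := by
        rw [prod_append_apply]
        simp [sref_self εk hεk0]
      have h2 : D.Pos (-(((l'.map sref).prod) εk)) := by
        rw [← h1]; exact hpos εk (D.pos_simple hεk)
      have h3 : ¬ D.Pos (((l'.map sref).prod) εk) := by
        intro h; exact D.not_pos_neg h h2
      obtain ⟨l₁, ε, l₂, hsplit, hεΔ, hprod⟩ :=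
        D.first_neg l' (fun x hx => hΔ x (by simp [hx])) (D.pos_simple hεk) h3
      set V := (l₂.map sref).prod with hV
      have hconj : sref ε = V * sref εk * V⁻¹ := by
        rw [← hprod, sref_conj]
      have hw : ((l' ++ [εk]).map sref).prod = ((l₁ ++ l₂).map sref).prod := by
        rw [hsplit]
        simp only [List.map_append, List.prod_append, List.map_cons, List.prod_cons,
          List.map_singleton, List.prod_singleton]
        rw [hconj]
        simp only [List.map_nil, List.prod_nil, mul_one, mul_assoc, hV, inv_mul_cancel_left]
        rw [sref_mul_self, mul_one]
      rw [hw]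
      have hlen2 : (l₁ ++ l₂).length ≤ n := by
        have := hlen
        rw [hsplit] at this
        simp at this ⊢
        omega
      refine ih (l₁ ++ l₂) hlen2 (fun x hx => ?_) (fun β hβ => by rw [← hw]; exact hpos β hβ)
      rcases List.mem_append.1 hx with h | h
      · exact hΔ x (by rw [hsplit]; simp [h])
      · exact hΔ x (by rw [hsplit]; simp [h])

lemma pos_preserving_eq_one {w : E ≃ₗᵢ[ℝ] E} (hw : w ∈ reflSubgroup (↑D.Δ : Set E))
    (hpos : ∀ β, D.Pos β → D.Pos (w β)) : w = 1 := by
  obtain ⟨l, hlΔ, rfl⟩ := D.exists_word hw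
  exact D.word_one l.length l le_rfl hlΔ hpos

end RS

namespace RS
variable {E : Type*} [NormedAddCommGroup E] [InnerProductSpace ℝ E] [FiniteDimensional ℝ E]
variable (D : RS E)

omit [FiniteDimensional ℝ E] in
lemma inner_self_pos' {x : E} (hx : x ≠ 0) : 0 < ⟪x, x⟫ :=
  lt_of_le_of_ne real_inner_self_nonneg (Ne.symm (inner_self_ne_zero.2 hx))

/-- height -/
noncomputable def ht (x : E) : ℝ := ∑ γ ∈ D.Δ, ⟪D.cw γ, x⟫

lemma ht_nat {x : E} (hx : x ∈ AddSubmonoid.closure (↑D.Δ : Set E)) : ∃ n : ℕ, D.ht x = n := by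
  have h : ∀ γ ∈ D.Δ, ∃ n : ℕ, ⟪D.cw γ, x⟫ = n := fun γ hγ => D.coeff_nat hx hγ
  choose f hf using h
  refine ⟨∑ γ ∈ D.Δ.attach, f γ γ.2, ?_⟩
  rw [ht, ← Finset.sum_attach D.Δ (fun γ => ⟪D.cw γ, x⟫)]
  push_cast
  exact Finset.sum_congr rfl fun γ _ => hf γ γ.2

lemma ht_ge_one {α : E} (hα : D.Pos α) : 1 ≤ D.ht α := by
  have hne : ∃ γ ∈ D.Δ, ⟪D.cw γ, α⟫ ≠ 0 := by
    by_contra h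
    push_neg at h
    have : α = 0 := by
      rw [D.repr hα.2, Finset.sum_congr rfl fun γ hγ => by rw [h γ hγ]]
      simp
    exact D.root_ne_zero hα.1 this
  obtain ⟨γ, hγ, hne⟩ := hne
  obtain ⟨n, hn⟩ := D.coeff_nat hα.2 hγ
  have h1 : (1 : ℝ) ≤ ⟪D.cw γ, α⟫ := by
    rw [hn] at hne ⊢
    exact_mod_cast Nat.one_le_iff_ne_zero.2 (by exact_mod_cast fun h => hne (by rw [h]; simp))
  calc (1 : ℝ) ≤ ⟪D.cw γ, α⟫ := h1
    _ ≤ D.ht α := Finset.single_le_sum (fun γ hγ => D.coeff_nonneg hα.2 hγ) hγ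

/-- every reflection in a positive root lies in the group generated by simple reflections -/
lemma sref_mem_simple : ∀ n : ℕ, ∀ α : E, D.Pos α → D.ht α ≤ n →
    sref α ∈ reflSubgroup (↑D.Δ : Set E) := by
  intro n
  induction n with
  | zero => intro α hα hht; exact absurd (le_trans (D.ht_ge_one hα) hht) (by norm_num)
  | succ n ih =>
    intro α hα hht
    by_cases hαΔ : α ∈ D.Δ
    · exact Subgroup.subset_closure ⟨α, hαΔ, rfl⟩
    · -- find a simple root with positive coefficient and positive inner product
      have hα0 : α ≠ 0 := D.root_ne_zero hα.1
      have hsum : ⟪α, α⟫ = ∑ γ ∈ D.Δ, ⟪D.cw γ, α⟫ * ⟪γ, α⟫ := by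
        conv_lhs => rw [show (⟪α, α⟫ : ℝ) = ⟪(∑ γ ∈ D.Δ, ⟪D.cw γ, α⟫ • γ : E), α⟫ by
          rw [← D.repr hα.2]]
        rw [sum_inner]
        exact Finset.sum_congr rfl fun γ _ => real_inner_smul_left γ α _
      have hex : ∃ ε ∈ D.Δ, 0 < ⟪D.cw ε, α⟫ ∧ 0 < ⟪ε, α⟫ := by
        by_contra h
        push_neg at h
        have hle : ∀ γ ∈ D.Δ, ⟪D.cw γ, α⟫ * ⟪γ, α⟫ ≤ 0 := by
          intro γ hγ
          have hc := D.coeff_nonneg hα.2 hγ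
          rcases lt_or_ge 0 ⟪D.cw γ, α⟫ with hc' | hc'
          · have := h γ hγ hc'
            exact mul_nonpos_of_nonneg_of_nonpos hc this
          · have : ⟪D.cw γ, α⟫ = 0 := le_antisymm hc' hc
            rw [this, zero_mul]
        have : ⟪α, α⟫ ≤ 0 := hsum ▸ Finset.sum_nonpos hle
        have := inner_self_pos' hα0
        linarith
      obtain ⟨ε, hεΔ, hcpos, hipos⟩ := hex
      have hεΦ : ε ∈ D.Φ := D.simple_mem_phi hεΔ
      have hε0 : ε ≠ 0 := D.root_ne_zero hεΦ
      have hαε : α ≠ ε := fun h => hαΔ (h ▸ hεΔ)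
      set β := sref ε α with hβ
      have hβpos : D.Pos β := D.sref_pos hεΔ hα hαε
      -- k is a positive integer
      set k := 2 * ⟪ε, α⟫ / ⟪ε, ε⟫ with hk
      have hkpos : 0 < k := by
        apply div_pos (by linarith) (inner_self_pos' hε0)
      have hk1 : 1 ≤ k := by
        obtain ⟨z, hz⟩ := D.hΦ.crystallographic ε hεΦ α hα.1
        rw [← hk] at hz
        rw [hz] at hkpos ⊢
        exact_mod_cast (by exact_mod_cast hkpos : (0:ℤ) < z)
      -- height drops by k
      have hhtβ : D.ht β = D.ht α - k := by
        rw [ht, ht]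
        have : ∀ γ ∈ D.Δ, ⟪D.cw γ, β⟫ = ⟪D.cw γ, α⟫ - k * ⟪D.cw γ, ε⟫ := by
          intro γ hγ
          rw [hβ, sref_apply, inner_sub_right, inner_smul_right, hk]
        rw [Finset.sum_congr rfl this, Finset.sum_sub_distrib, ← Finset.mul_sum]
        have : ∑ γ ∈ D.Δ, ⟪D.cw γ, ε⟫ = 1 := by
          rw [Finset.sum_congr rfl fun γ hγ => D.hcw γ hγ ε hεΔ]
          rw [Finset.sum_ite_eq' D.Δ ε (fun _ => (1:ℝ))]
          simp [hεΔ]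
        rw [this, mul_one]
      have hβht : D.ht β ≤ n := by
        rw [hhtβ]
        push_cast at hht ⊢
        linarith
      have hβmem := ih β hβpos hβht
      have hαβ : α = sref ε β := by
        rw [hβ, ← lie_mul_apply, sref_mul_self]
        rfl
      rw [hαβ, sref_conj]
      exact Subgroup.mul_mem _
        (Subgroup.mul_mem _ (Subgroup.subset_closure ⟨ε, hεΔ, rfl⟩) hβmem)
        (Subgroup.inv_mem _ (Subgroup.subset_closure ⟨ε, hεΔ, rfl⟩))

lemma weyl_le_simple : reflSubgroup (↑D.Φ : Set E) ≤ reflSubgroup (↑D.Δ : Set E) := by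
  rw [reflSubgroup, Subgroup.closure_le]
  rintro w ⟨α, hα, rfl⟩
  have hαΦ : α ∈ D.Φ := hα
  rcases D.pos_or_neg hαΦ with h | h
  · obtain ⟨n, hn⟩ := D.ht_nat h.2
    exact D.sref_mem_simple n α h (le_of_eq hn)
  · obtain ⟨n, hn⟩ := D.ht_nat h.2
    have := D.sref_mem_simple n (-α) h (le_of_eq hn)
    rwa [sref_neg] at this

end RS

namespace RS
variable {E : Type*} [NormedAddCommGroup E] [InnerProductSpace ℝ E] [FiniteDimensional ℝ E]
variable (D : RS E)

/-- inversion set -/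
noncomputable def N (w : E ≃ₗᵢ[ℝ] E) : Finset E :=
  D.Φ.filter (fun α => D.Pos α ∧ ¬ D.Pos (w⁻¹ α))

lemma inv_pos_of_simple {w : E ≃ₗᵢ[ℝ] E} (hw : w ∈ reflSubgroup (↑D.Δ : Set E))
    (h : ∀ ε ∈ D.Δ, D.Pos (w⁻¹ ε)) : ∀ β, D.Pos β → D.Pos (w⁻¹ β) := by
  intro β hβ
  refine ⟨D.simple_weyl_maps_phi (Subgroup.inv_mem _ hw) β hβ.1, ?_⟩
  have hrep : w⁻¹ β = ∑ γ ∈ D.Δ, ⟪D.cw γ, β⟫ • (w⁻¹ γ) := by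
    conv_lhs => rw [D.repr hβ.2]
    rw [map_sum]
    exact Finset.sum_congr rfl fun γ _ => by rw [map_smul]
  rw [hrep]
  refine AddSubmonoid.sum_mem _ fun γ hγ => ?_
  obtain ⟨n, hn⟩ := D.coeff_nat hβ.2 hγ
  rw [hn, Nat.cast_smul_eq_nsmul]
  exact nsmul_mem (h γ hγ).2 n

lemma N_card_lt {w : E ≃ₗᵢ[ℝ] E} {ε : E} (hw : w ∈ reflSubgroup (↑D.Δ : Set E))
    (hε : ε ∈ D.Δ) (hneg : ¬ D.Pos (w⁻¹ ε)) :
    (D.N (sref ε * w)).card < (D.N w).card := by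
  have hεΦ : ε ∈ D.Φ := D.simple_mem_phi hε
  have hwinv : ∀ β ∈ D.Φ, w⁻¹ β ∈ D.Φ :=
    D.simple_weyl_maps_phi (Subgroup.inv_mem _ hw)
  have hεN : ε ∈ D.N w := Finset.mem_filter.2 ⟨hεΦ, D.pos_simple hε, hneg⟩
  have hposneg : D.Pos (-(w⁻¹ ε)) := by
    rcases D.pos_or_neg (hwinv ε hεΦ) with h | h
    · exact absurd h hneg
    · exact h
  have hinv : ∀ x, (sref ε * w)⁻¹ x = w⁻¹ (sref ε x) := by
    intro x
    rw [mul_inv_rev, sref_inv, lie_mul_apply]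
  have hmaps : ∀ α ∈ D.N (sref ε * w), sref ε α ∈ (D.N w).erase ε := by
    intro α hα
    rw [N, Finset.mem_filter] at hα
    obtain ⟨hαΦ, hαpos, hαneg⟩ := hα
    rw [hinv] at hαneg
    have hαε : α ≠ ε := by
      rintro rfl
      rw [sref_self α (D.root_ne_zero hαΦ), map_neg] at hαneg
      exact hαneg hposneg
    have hα2 : D.Pos (sref ε α) := D.sref_pos hε hαpos hαε
    refine Finset.mem_erase.2 ⟨?_, Finset.mem_filter.2 ⟨hα2.1, hα2, hαneg⟩⟩
    intro h
    have h4 : (sref ε) ((sref ε) α) = α := by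
      rw [← lie_mul_apply, sref_mul_self]; rfl
    have h2 : α = sref ε ε := by rw [← h4, h]
    rw [sref_self ε (D.root_ne_zero hεΦ)] at h2
    subst h2
    exact D.not_pos_neg_simple hε hαpos
  have hinj : Set.InjOn (fun x => sref ε x) ↑(D.N (sref ε * w)) := fun a _ b _ h =>
    (sref ε).injective h
  calc (D.N (sref ε * w)).card ≤ ((D.N w).erase ε).card :=
        Finset.card_le_card_of_injOn _ hmaps hinj
    _ < (D.N w).card := Finset.card_erase_lt_of_mem hεN

omit [FiniteDimensional ℝ E] in
lemma isConnected_insert {Q : Finset E} (hQ : IsConnectedSet (↑Q : Set E)) {x : E}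
    (hx : ∃ γ₀ ∈ Q, ⟪x, γ₀⟫ ≠ 0) : IsConnectedSet (↑(insert x Q) : Set E) := by
  by_cases hxQ : x ∈ Q
  · rwa [Finset.insert_eq_self.2 hxQ]
  obtain ⟨γ₀, hγ₀, hxγ₀⟩ := hx
  set S : Set E := ↑(insert x Q) with hS
  have hsub : ∀ a : E, a ∈ Q → a ∈ S := fun a ha => by
    rw [hS, Finset.coe_insert]
    exact Set.mem_insert_of_mem _ (by exact_mod_cast ha)
  have hxS : x ∈ S := by
    rw [hS, Finset.coe_insert]
    exact Set.mem_insert _ _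
  have hmono : ∀ a b : E,
      Relation.ReflTransGen (fun u v => u ∈ (↑Q : Set E) ∧ v ∈ (↑Q : Set E) ∧ ⟪u, v⟫ ≠ 0) a b →
      Relation.ReflTransGen (fun u v => u ∈ S ∧ v ∈ S ∧ ⟪u, v⟫ ≠ 0) a b := by
    intro a b h
    exact Relation.ReflTransGen.mono (p := fun u v => u ∈ S ∧ v ∈ S ∧ ⟪u, v⟫ ≠ 0)
      (fun u v (hh : u ∈ (↑Q : Set E) ∧ v ∈ (↑Q : Set E) ∧ ⟪u, v⟫ ≠ 0) => ⟨hsub u (by exact_mod_cast hh.1), hsub v (by exact_mod_cast hh.2.1), hh.2.2⟩) a b h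
  have hsymm : Symmetric (fun u v : E => u ∈ S ∧ v ∈ S ∧ ⟪u, v⟫ ≠ 0) := by
    rintro a b ⟨h1, h2, h3⟩
    exact ⟨h2, h1, by rwa [real_inner_comm]⟩
  have hxall : ∀ y ∈ Q,
      Relation.ReflTransGen (fun u v => u ∈ S ∧ v ∈ S ∧ ⟪u, v⟫ ≠ 0) x y := by
    intro y hy
    exact Relation.ReflTransGen.head ⟨hxS, hsub γ₀ hγ₀, hxγ₀⟩
      (hmono _ _ (hQ γ₀ (by exact_mod_cast hγ₀) y (by exact_mod_cast hy)))
  intro a ha b hb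
  rcases Finset.mem_insert.1 (by exact_mod_cast ha) with rfl | haQ
  · rcases Finset.mem_insert.1 (by exact_mod_cast hb) with rfl | hbQ
    · exact Relation.ReflTransGen.refl
    · exact hxall b hbQ
  · rcases Finset.mem_insert.1 (by exact_mod_cast hb) with rfl | hbQ
    · haveI : Std.Symm (fun u v : E => u ∈ S ∧ v ∈ S ∧ ⟪u, v⟫ ≠ 0) := ⟨fun _ _ h => hsymm h⟩
      exact Std.Symm.symm _ _ (hxall a haQ)
    · exact hmono _ _ (hQ a (by exact_mod_cast haQ) b (by exact_mod_cast hbQ))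

/-- The statement proved by the main induction. -/
def MainProp (δ : E) (w : E ≃ₗᵢ[ℝ] E) : Prop :=
  ∃ c : E → ℕ, D.cw δ - w (D.cw δ) = ∑ γ ∈ D.Δ, (c γ : ℝ) • coroot γ ∧
    IsConnectedSet (↑(insert δ (D.Δ.filter fun γ => c γ ≠ 0)) : Set E)

lemma main (δ : E) (hδ : δ ∈ D.Δ) : ∀ (n : ℕ) (w : E ≃ₗᵢ[ℝ] E),
    w ∈ reflSubgroup (↑D.Δ : Set E) → (D.N w).card ≤ n → D.MainProp δ w := by
  have base : ∀ w : E ≃ₗᵢ[ℝ] E, w ∈ reflSubgroup (↑D.Δ : Set E) →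
      (∀ ε ∈ D.Δ, D.Pos (w⁻¹ ε)) → D.MainProp δ w := by
    intro w hw h
    have hone : w⁻¹ = 1 :=
      D.pos_preserving_eq_one (Subgroup.inv_mem _ hw) (D.inv_pos_of_simple hw h)
    have hw1 : w = 1 := by rwa [inv_eq_one] at hone
    refine ⟨fun _ => 0, ?_, ?_⟩
    · simp [hw1]
    · have hfil : (D.Δ.filter fun γ => (fun _ : E => (0:ℕ)) γ ≠ 0) = ∅ := by simp
      rw [hfil]
      intro a ha b hb
      have ha' : a = δ := by simpa using ha
      have hb' : b = δ := by simpa using hb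
      subst ha'; subst hb'
      exact Relation.ReflTransGen.refl
  intro n
  induction n with
  | zero =>
    intro w hw hcard
    by_cases hex : ∃ ε ∈ D.Δ, ¬ D.Pos (w⁻¹ ε)
    · exfalso
      obtain ⟨ε, hε, hneg⟩ := hex
      have h1 : ε ∈ D.N w := Finset.mem_filter.2 ⟨D.simple_mem_phi hε, D.pos_simple hε, hneg⟩
      have := Finset.card_pos.2 ⟨ε, h1⟩
      omega
    · push_neg at hex
      exact base w hw hex
  | succ n ih =>
    intro w hw hcard
    by_cases hex : ∃ ε ∈ D.Δ, ¬ D.Pos (w⁻¹ ε)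
    · obtain ⟨ε, hε, hneg⟩ := hex
      have hεΦ : ε ∈ D.Φ := D.simple_mem_phi hε
      set w' := sref ε * w with hw'def
      have hw' : w' ∈ reflSubgroup (↑D.Δ : Set E) :=
        Subgroup.mul_mem _ (Subgroup.subset_closure ⟨ε, hε, rfl⟩) hw
      have hcard' : (D.N w').card ≤ n := by
        have := D.N_card_lt hw hε hneg
        rw [← hw'def] at this
        omega
      obtain ⟨c, hc, hconn⟩ := ih w' hw' hcard'
      have hwrec : w = sref ε * w' := by
        rw [hw'def, ← mul_assoc, sref_mul_self, one_mul]
      set μ := w' (D.cw δ) with hμ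
      have heq : D.cw δ - w (D.cw δ) = (D.cw δ - μ) + ⟪ε, μ⟫ • coroot ε := by
        conv_lhs => rw [hwrec]
        rw [lie_mul_apply, ← hμ, sref_apply']
        abel
      have hβ : D.Pos (w'⁻¹ ε) := by
        have h1 : w'⁻¹ ε = -(w⁻¹ ε) := by
          rw [hw'def, mul_inv_rev, sref_inv, lie_mul_apply, sref_self ε (D.root_ne_zero hεΦ),
            map_neg]
        rw [h1]
        rcases D.pos_or_neg (D.simple_weyl_maps_phi (Subgroup.inv_mem _ hw) ε hεΦ) with h | h
        · exact absurd h hneg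
        · exact h
      obtain ⟨m, hm⟩ := D.coeff_nat hβ.2 hδ
      have hk : ⟪ε, μ⟫ = (m : ℝ) := by
        have h1 : ⟪ε, μ⟫ = ⟪w' (w'⁻¹ ε), w' (D.cw δ)⟫ := by rw [apply_inv_apply]
        rw [h1, LinearIsometryEquiv.inner_map_map, real_inner_comm, hm]
      rcases Nat.eq_zero_or_pos m with hm0 | hmpos
      · refine ⟨c, ?_, hconn⟩
        rw [heq, hk, hm0, Nat.cast_zero, zero_smul, add_zero, hc]
      · set c' : E → ℕ := fun γ => if γ = ε then c γ + m else c γ with hc'def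
        have hsum : ∑ γ ∈ D.Δ, (c' γ : ℝ) • coroot γ
            = (∑ γ ∈ D.Δ, (c γ : ℝ) • coroot γ) + (m : ℝ) • coroot ε := by
          have h1 : ∀ γ ∈ D.Δ, (c' γ : ℝ) • coroot γ
              = (c γ : ℝ) • coroot γ + (if γ = ε then (m : ℝ) • coroot γ else 0) := by
            intro γ _
            by_cases h : γ = ε
            · rw [hc'def]
              simp only [h, if_pos rfl]
              push_cast
              rw [add_smul]
            · rw [hc'def]
              simp only [if_neg h, add_zero]
          rw [Finset.sum_congr rfl h1, Finset.sum_add_distrib,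
            Finset.sum_ite_eq' D.Δ ε (fun γ => (m : ℝ) • coroot γ), if_pos hε]
        set Qold := insert δ (D.Δ.filter fun γ => c γ ≠ 0) with hQold
        have hadj : ε ∈ Qold ∨ ∃ γ₀ ∈ Qold, ⟪ε, γ₀⟫ ≠ 0 := by
          by_contra hcon
          push_neg at hcon
          obtain ⟨hεQ, hperp⟩ := hcon
          have hεδ : ε ≠ δ := fun h => hεQ (h ▸ Finset.mem_insert_self δ _)
          have h2 : ⟪ε, D.cw δ⟫ = 0 := by
            rw [real_inner_comm, D.hcw δ hδ ε hε, if_neg (fun h => hεδ h.symm)]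
          have h3 : ⟪ε, D.cw δ - μ⟫ = 0 := by
            rw [hc, inner_sum]
            refine Finset.sum_eq_zero fun γ hγ => ?_
            rw [real_inner_smul_right]
            by_cases h : c γ = 0
            · rw [h]; simp
            · have hγQ : γ ∈ Qold := Finset.mem_insert_of_mem (Finset.mem_filter.2 ⟨hγ, h⟩)
              rw [coroot, real_inner_smul_right, hperp γ hγQ, mul_zero, mul_zero]
          rw [inner_sub_right, h2, zero_sub, neg_eq_zero, hk] at h3
          exact absurd h3 (Nat.cast_ne_zero.2 (by omega))
        refine ⟨c', ?_, ?_⟩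
        · rw [heq, hc, hsum, hk]
        · have hQnew : insert δ (D.Δ.filter fun γ => c' γ ≠ 0) = insert ε Qold := by
            have hfil : (D.Δ.filter fun γ => c' γ ≠ 0)
                = insert ε (D.Δ.filter fun γ => c γ ≠ 0) := by
              ext γ
              rw [Finset.mem_insert, Finset.mem_filter, Finset.mem_filter, hc'def]
              by_cases h : γ = ε
              · subst h
                simp [hε]
                omega
              · simp only [if_neg h]
                constructor
                · intro hh; exact Or.inr hh
                · rintro (rfl | hh)
                  · exact absurd rfl h
                  · exact hh
            rw [hQold, hfil, Finset.insert_comm]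
          rw [hQnew]
          rcases hadj with h | h
          · rwa [Finset.insert_eq_self.2 h]
          · exact isConnected_insert hconn h
    · push_neg at hex
      exact base w hw hex

end RS

/-- Let `Φ` be irreducible with base `Δ`, fundamental coweights `cw α = ω̌_α`
and fundamental weights `wt α = ω_α`, and let `δ ≠ δ'` be simple roots with
`[δ, δ'] = P` the (unique) minimal connected subset of `Δ` containing `δ` and
`δ'` (the path from `δ` to `δ'` in the Dynkin diagram).  If `τ` in the Weyl
group satisfies `(τω̌_δ, ω_{δ'})` less than `(ω̌_δ, ω_{δ'})`, then
`ω̌_δ - τω̌_δ ≥ Σ_{ε ∈ [δ,δ']} ε̌` in the dominance order, i.e. the difference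
is a nonnegative integral combination of the simple coroots. -/
theorem coweight_sub_weyl_coweight_ge_path
    (Φ : Finset E) (hΦ : IsRootSystem (↑Φ : Set E))
    (Δ : Finset E) (hΔΦ : (↑Δ : Set E) ⊆ (↑Φ : Set E))
    (hbase : ∀ β ∈ Φ, β ∈ AddSubmonoid.closure (↑Δ : Set E) ∨
      -β ∈ AddSubmonoid.closure (↑Δ : Set E))
    (hind : LinearIndependent ℝ (fun x : (Δ : Set E) => (x : E)))
    (hirr : IsConnectedSet (↑Δ : Set E))
    (cw : E → E) (hcw : ∀ α ∈ Δ, ∀ β ∈ Δ, ⟪cw α, β⟫ = if α = β then 1 else 0)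
    (wt : E → E) (hwt : ∀ α ∈ Δ, ∀ β ∈ Δ, ⟪wt α, coroot β⟫ = if α = β then 1 else 0)
    (δ δ' : E) (hδ : δ ∈ Δ) (hδ' : δ' ∈ Δ) (hne : δ ≠ δ')
    (P : Finset E) (hPΔ : P ⊆ Δ) (hδP : δ ∈ P) (hδ'P : δ' ∈ P)
    (hPconn : IsConnectedSet (↑P : Set E))
    (hPmin : ∀ Q : Finset E, Q ⊆ Δ → δ ∈ Q → δ' ∈ Q → IsConnectedSet (↑Q : Set E) → P ⊆ Q)
    (τ : E ≃ₗᵢ[ℝ] E) (hτ : τ ∈ WeylGroup (↑Φ : Set E))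
    (hlt : ⟪τ (cw δ), wt δ'⟫ < ⟪cw δ, wt δ'⟫) :
    ∃ c : E → ℕ, cw δ - τ (cw δ) =
      (∑ ε ∈ P, coroot ε) + ∑ α ∈ Δ, (c α : ℝ) • coroot α := by
  set D : RS E := ⟨Φ, Δ, hΦ, hΔΦ, hbase, cw, hcw⟩ with hD
  have hτΔ : τ ∈ reflSubgroup (↑Δ : Set E) := D.weyl_le_simple hτ
  obtain ⟨c, hc, hconn⟩ := D.main δ hδ (D.N τ).card τ hτΔ le_rfl
  -- τ does not fix the coweight
  have hτne : τ (cw δ) ≠ cw δ := fun h => absurd hlt (by rw [h]; exact lt_irrefl _)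
  set v := cw δ - τ (cw δ) with hv
  have hvne : v ≠ 0 := sub_ne_zero.2 (Ne.symm hτne)
  -- the coefficient of δ' is nonzero
  have hcδ' : c δ' ≠ 0 := by
    have h1 : 0 < ⟪v, wt δ'⟫ := by
      rw [hv, inner_sub_left]
      linarith
    have h2 : ⟪v, wt δ'⟫ = (c δ' : ℝ) := by
      rw [hc, sum_inner]
      rw [Finset.sum_congr rfl (fun γ hγ => ?_), Finset.sum_ite_eq Δ δ' (fun γ => (c γ : ℝ)),
        if_pos hδ']
      rw [real_inner_smul_left, real_inner_comm, hwt δ' hδ' γ hγ]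
      split_ifs <;> ring
    rw [h2] at h1
    exact_mod_cast h1.ne'
  -- the coefficient of δ is nonzero
  have hcδ : c δ ≠ 0 := by
    have hip : ⟪τ (cw δ), τ (cw δ)⟫ = ⟪cw δ, cw δ⟫ := τ.inner_map_map _ _
    have hvv : 0 < ⟪v, v⟫ := RS.inner_self_pos' hvne
    have h3 : 0 < ⟪v, cw δ⟫ := by
      have e1 : ⟪v, v⟫ = ⟪v, cw δ⟫ - ⟪v, τ (cw δ)⟫ := inner_sub_right v _ _
      have e2 : ⟪v, τ (cw δ)⟫ = ⟪cw δ, τ (cw δ)⟫ - ⟪τ (cw δ), τ (cw δ)⟫ :=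
        inner_sub_left _ _ _
      have e3 : ⟪v, cw δ⟫ = ⟪cw δ, cw δ⟫ - ⟪τ (cw δ), cw δ⟫ := inner_sub_left _ _ _
      have e4 : ⟪cw δ, τ (cw δ)⟫ = ⟪τ (cw δ), cw δ⟫ := real_inner_comm _ _
      linarith
    have hδδ : 0 < ⟪δ, δ⟫ := RS.inner_self_pos' (D.root_ne_zero (D.simple_mem_phi hδ))
    have h5 : ⟪v, cw δ⟫ = (c δ : ℝ) * (2 / ⟪δ, δ⟫) := by
      rw [hc, sum_inner]
      rw [Finset.sum_congr rfl (fun γ hγ => ?_),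
        Finset.sum_ite_eq Δ δ (fun γ => (c γ : ℝ) * (2 / ⟪γ, γ⟫)), if_pos hδ]
      rw [real_inner_smul_left, coroot, real_inner_smul_left,
        show (inner ℝ γ (cw δ) : ℝ) = if δ = γ then 1 else 0 from by
          rw [real_inner_comm]; exact hcw δ hδ γ hγ]
      split_ifs <;> ring
    rw [h5] at h3
    intro h0
    rw [h0] at h3
    norm_num at h3
  -- P is inside the support
  set Q := insert δ (Δ.filter fun γ => c γ ≠ 0) with hQ
  have hQΔ : Q ⊆ Δ := by
    rw [hQ]
    exact Finset.insert_subset hδ (Finset.filter_subset _ _)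
  have hδQ : δ ∈ Q := Finset.mem_insert_self _ _
  have hδ'Q : δ' ∈ Q :=
    Finset.mem_insert_of_mem (Finset.mem_filter.2 ⟨hδ', hcδ'⟩)
  have hPQ : P ⊆ Q := hPmin Q hQΔ hδQ hδ'Q hconn
  have hge : ∀ ε ∈ P, 1 ≤ c ε := by
    intro ε hε
    rcases Finset.mem_insert.1 (hPQ hε) with rfl | hmem
    · exact Nat.one_le_iff_ne_zero.2 hcδ
    · exact Nat.one_le_iff_ne_zero.2 (Finset.mem_filter.1 hmem).2
  -- assemble
  refine ⟨fun γ => if γ ∈ P then c γ - 1 else c γ, ?_⟩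
  rw [hc]
  have key : ∀ γ ∈ Δ, (c γ : ℝ) • coroot γ
      = (if γ ∈ P then (1:ℝ) else 0) • coroot γ
        + ((if γ ∈ P then c γ - 1 else c γ : ℕ) : ℝ) • coroot γ := by
    intro γ _
    by_cases h : γ ∈ P
    · rw [if_pos h, if_pos h, ← add_smul, Nat.cast_sub (hge γ h)]
      norm_num
    · rw [if_neg h, if_neg h, zero_smul, zero_add]
  rw [Finset.sum_congr rfl key, Finset.sum_add_distrib]
  congr 1
  simp only [ite_smul, one_smul, zero_smul]
  rw [Finset.sum_ite_mem Δ P (fun γ => coroot γ), Finset.inter_eq_right.2 hPΔ]
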